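/- Per-sweep ascent bound for the Gauss–Seidel NPDo iteration. Let {(P_1^{(j)},…,P_m^{(j)})}_{j≥0} be generated by the Gauss–Seidel NPDo iteration as in the context. Then for every j ≥ 0, f(P_1^{(j+1)},…,P_m^{(j+1)}) ≥ f(P_1^{(j)},…,P_m^{(j)}) + Σ_{ℓ=1}^m [‖ℋ̂_ℓ^{(j)}‖_tr − Re tr((P_ℓ^{(j)})^H ℋ̂_ℓ^{(j)})], and each bracketed term ‖ℋ̂_ℓ^{(j)}‖_tr − Re tr((P_ℓ^{(j)})^H ℋ̂_ℓ^{(j)}) is nonnegative. -/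

import Mathlib

open Matrix Filter Topology
open scoped ComplexOrder Classical

/-- The entries of the multi-mode product `B ×₁ P₁ᴴ ×₂ ⋯ ×ₘ Pₘᴴ` of an `m`-mode tensor
`B` of size `n 0 × ⋯ × n (m-1)` with the conjugate transposes of the matrices `P ℓ`.
The column index set of `P ℓ` is `(s : Fin t) × Fin (κ ℓ s)`, encoding the partition of
`k ℓ = Σ s, κ ℓ s` into `t` blocks (block `s` has the indices with first component `s`). -/
noncomputable def multiProd {m t : ℕ} {n : Fin m → ℕ} {κ : Fin m → Fin t → ℕ}
    (B : (∀ ℓ, Fin (n ℓ)) → ℂ)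
    (P : ∀ ℓ, Matrix (Fin (n ℓ)) ((s : Fin t) × Fin (κ ℓ s)) ℂ) :
    (∀ ℓ, (s : Fin t) × Fin (κ ℓ s)) → ℂ :=
  fun i => ∑ j : ∀ ℓ, Fin (n ℓ), (∏ ℓ, star (P ℓ (j ℓ) (i ℓ))) * B j

/-- The block-diagonal objective
`f(P₁,…,Pₘ) = ‖BDiag(B ×₁ P₁ᴴ ×₂ ⋯ ×ₘ Pₘᴴ)‖_F²`: the sum of `|T(i)|²` over all
multi-indices `i` whose components all lie in the same diagonal block. -/
noncomputable def fObj {m t : ℕ} {n : Fin m → ℕ} {κ : Fin m → Fin t → ℕ}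
    (B : (∀ ℓ, Fin (n ℓ)) → ℂ)
    (P : ∀ ℓ, Matrix (Fin (n ℓ)) ((s : Fin t) × Fin (κ ℓ s)) ℂ) : ℝ :=
  ∑ i : ∀ ℓ, (s : Fin t) × Fin (κ ℓ s),
    if ∃ s : Fin t, ∀ ℓ, (i ℓ).1 = s then Complex.normSq (multiProd B P i) else 0

/-- The tensor `B_{ℓ,s} = B ×₁ P_{1s}ᴴ ⋯ ×_{ℓ-1} P_{ℓ-1,s}ᴴ ×_{ℓ+1} P_{ℓ+1,s}ᴴ ⋯ ×ₘ P_{ms}ᴴ`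
(mode products by the `s`-th column blocks over every mode except `ℓ`), evaluated at the index
whose `ℓ`-th component is `a` and whose other components are given by `ih`. -/
noncomputable def Bls {m t : ℕ} {n : Fin m → ℕ} {κ : Fin m → Fin t → ℕ}
    (B : (∀ ℓ, Fin (n ℓ)) → ℂ)
    (P : ∀ ℓ, Matrix (Fin (n ℓ)) ((s : Fin t) × Fin (κ ℓ s)) ℂ)
    (ℓ : Fin m) (s : Fin t) (a : Fin (n ℓ))
    (ih : ∀ r : {r : Fin m // r ≠ ℓ}, Fin (κ r.1 s)) : ℂ :=
  ∑ j : ∀ r, Fin (n r),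
    if j ℓ = a then (∏ r : {r : Fin m // r ≠ ℓ}, star (P r.1 (j r.1) ⟨s, ih r⟩)) * B j else 0

/-- The matrix `H_{ℓs}(P₁,…,Pₘ) ∈ ℂ^{n_ℓ×n_ℓ}` with `(a,b)`-entry
`Σ_î B_{ℓ,s}(î[ℓ↦a])·conj(B_{ℓ,s}(î[ℓ↦b]))`, summed over multi-indices `î` with the
`ℓ`-th coordinate ignored. -/
noncomputable def Hmat {m t : ℕ} {n : Fin m → ℕ} {κ : Fin m → Fin t → ℕ}
    (B : (∀ ℓ, Fin (n ℓ)) → ℂ)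
    (P : ∀ ℓ, Matrix (Fin (n ℓ)) ((s : Fin t) × Fin (κ ℓ s)) ℂ)
    (ℓ : Fin m) (s : Fin t) : Matrix (Fin (n ℓ)) (Fin (n ℓ)) ℂ :=
  Matrix.of fun a b =>
    ∑ ih : ∀ r : {r : Fin m // r ≠ ℓ}, Fin (κ r.1 s),
      Bls B P ℓ s a ih * star (Bls B P ℓ s b ih)

/-- The partial Euclidean gradient `ℋ_ℓ(P₁,…,Pₘ) ∈ ℂ^{n_ℓ×k_ℓ}` of `fObj` with respect to
`P ℓ` (for the real inner product `⟨X,Y⟩ = Re tr(Yᴴ X)`): its `s`-th column block is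
`2 · H_{ℓs}(P₁,…,Pₘ) · P_{ℓs}`. -/
noncomputable def scrH {m t : ℕ} {n : Fin m → ℕ} {κ : Fin m → Fin t → ℕ}
    (B : (∀ ℓ, Fin (n ℓ)) → ℂ)
    (P : ∀ ℓ, Matrix (Fin (n ℓ)) ((s : Fin t) × Fin (κ ℓ s)) ℂ)
    (ℓ : Fin m) : Matrix (Fin (n ℓ)) ((s : Fin t) × Fin (κ ℓ s)) ℂ :=
  Matrix.of fun a sc => 2 * ∑ b, Hmat B P ℓ sc.1 a b * P ℓ b sc

/-- The trace norm (nuclear norm) of a complex matrix: the sum of all its singular values,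
computed as the sum of the square roots of the eigenvalues of `Hᴴ * H`. -/
noncomputable def traceNorm {α β : Type*} [Fintype α] [Fintype β] [DecidableEq β]
    (H : Matrix α β ℂ) : ℝ :=
  ∑ i, Real.sqrt ((Matrix.posSemidef_conjTranspose_mul_self H).1.eigenvalues i)



open scoped MatrixOrder

section helpers

lemma prod_split {M : Type*} [CommMonoid M] {m : ℕ} (ℓ : Fin m) (f : Fin m → M) :
    ∏ r, f r = f ℓ * ∏ r : {r : Fin m // r ≠ ℓ}, f r.1 := by
  rw [← Finset.mul_prod_erase Finset.univ f (Finset.mem_univ ℓ)]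
  congr 1
  exact Finset.prod_subtype _ (by simp) _

lemma trace_ctm_re_nonneg {α β : Type*} [Fintype α] [Fintype β] (X : Matrix α β ℂ) :
    0 ≤ ((Xᴴ * X).trace).re := by
  have h : (Xᴴ * X).trace = ∑ i, ∑ k, (Complex.normSq (X k i) : ℂ) := by
    simp only [Matrix.trace, Matrix.diag, Matrix.mul_apply, Matrix.conjTranspose_apply]
    refine Finset.sum_congr rfl fun i _ => Finset.sum_congr rfl fun k _ => ?_
    rw [Complex.normSq_eq_conj_mul_self]
    rfl
  rw [h]
  push_cast
  rw [Complex.re_sum]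
  refine Finset.sum_nonneg fun i _ => ?_
  rw [Complex.re_sum]
  refine Finset.sum_nonneg fun k _ => ?_
  simp [Complex.normSq_nonneg]

lemma sqrt_trace_re {k : Type*} [Fintype k] [DecidableEq k] {M : Matrix k k ℂ}
    (hM : M.PosSemidef) :
    ((CFC.sqrt M).trace).re = ∑ i, Real.sqrt (hM.1.eigenvalues i) := by
  rw [CFC.sqrt_eq_cfc, cfc_nnreal_eq_real _ M, hM.1.cfc_eq]
  simp only [IsHermitian.cfc, Unitary.conjStarAlgAut_apply]
  rw [Matrix.trace_mul_cycle]
  have hU : (star hM.1.eigenvectorUnitary : Matrix k k ℂ) * hM.1.eigenvectorUnitary.1 = 1 := by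
    exact Matrix.mem_unitaryGroup_iff'.mp hM.1.eigenvectorUnitary.2
  rw [hU, Matrix.one_mul, Matrix.trace_diagonal]
  rw [Complex.re_sum]
  simp [Real.coe_sqrt, Real.coe_toNNReal', max_eq_left (hM.eigenvalues_nonneg _)]

end helpers
section reindex

variable {m t : ℕ} {n : Fin m → ℕ} {κ : Fin m → Fin t → ℕ}
  (B : (∀ ℓ, Fin (n ℓ)) → ℂ)
  (P : ∀ ℓ, Matrix (Fin (n ℓ)) ((s : Fin t) × Fin (κ ℓ s)) ℂ)

lemma multiProd_block (ℓ : Fin m) (s : Fin t) (c : ∀ r, Fin (κ r s)) :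
    multiProd B P (fun r => ⟨s, c r⟩) =
      ∑ a, star (P ℓ a ⟨s, c ℓ⟩) * Bls B P ℓ s a (fun r => c r.1) := by
  unfold multiProd Bls
  simp only [Finset.mul_sum]
  rw [Finset.sum_comm]
  refine Finset.sum_congr rfl fun j _ => ?_
  simp only [mul_ite, mul_zero]
  rw [Finset.sum_ite_eq Finset.univ (j ℓ)]
  simp only [Finset.mem_univ, if_pos]
  rw [prod_split ℓ (fun r => star (P r (j r) ⟨s, c r⟩))]
  ring

lemma fObj_eq₀ (ℓ : Fin m) :
    fObj B P = ∑ s : Fin t, ∑ c : ∀ r, Fin (κ r s),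
      Complex.normSq (multiProd B P (fun r => ⟨s, c r⟩)) := by
  classical
  set e : ((s : Fin t) × (∀ r, Fin (κ r s))) → (∀ r, (s : Fin t) × Fin (κ r s)) :=
    fun x r => ⟨x.1, x.2 r⟩ with he_def
  have he : ∀ x ∈ Finset.univ, ∀ y ∈ Finset.univ, e x = e y → x = y := by
    rintro ⟨s, c⟩ - ⟨s', c'⟩ - h
    obtain rfl : s = s' := congrArg (fun i => (i ℓ).1) h
    refine congrArg (Sigma.mk s) ?_
    funext r
    have h2 := congrFun h r
    simp only [he_def] at h2
    simpa using h2
  have hv : ∀ i ∈ (Finset.univ : Finset (∀ r, (s : Fin t) × Fin (κ r s))),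
      i ∉ Finset.univ.image e →
      (if ∃ s : Fin t, ∀ r, (i r).1 = s then Complex.normSq (multiProd B P i) else 0) = 0 := by
    intro i _ hi
    rw [if_neg]
    rintro ⟨s, hs⟩
    refine hi (Finset.mem_image.mpr ⟨⟨s, fun r =>
      cast (congrArg (fun u => Fin (κ r u)) (hs r)) ((i r).2)⟩, Finset.mem_univ _, ?_⟩)
    funext r
    exact (Sigma.ext (hs r) (cast_heq _ _).symm).symm
  rw [fObj, ← Finset.sum_subset (Finset.subset_univ (Finset.univ.image e)) hv,
    Finset.sum_image he]
  rw [← Finset.univ_sigma_univ, Finset.sum_sigma]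
  refine Finset.sum_congr rfl fun s _ => Finset.sum_congr rfl fun c _ => ?_
  rw [if_pos ⟨s, fun r => rfl⟩]

lemma fObj_eq (ℓ : Fin m) :
    fObj B P = ∑ s : Fin t, ∑ a : Fin (κ ℓ s),
      ∑ ih : ∀ r : {r : Fin m // r ≠ ℓ}, Fin (κ r.1 s),
      Complex.normSq (∑ b, star (P ℓ b ⟨s, a⟩) * Bls B P ℓ s b ih) := by
  rw [fObj_eq₀ B P ℓ]
  refine Finset.sum_congr rfl fun s _ => ?_
  rw [Fintype.sum_equiv (Equiv.piSplitAt ℓ (fun r => Fin (κ r s))) _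
    (fun p => Complex.normSq (∑ b, star (P ℓ b ⟨s, p.1⟩) * Bls B P ℓ s b p.2))
    (fun c => by rw [multiProd_block B P ℓ s c]; simp [Equiv.piSplitAt_apply])]
  rw [Fintype.sum_prod_type]

lemma Bls_congr {P' : ∀ ℓ, Matrix (Fin (n ℓ)) ((s : Fin t) × Fin (κ ℓ s)) ℂ}
    (ℓ : Fin m) (h : ∀ r, r ≠ ℓ → P r = P' r) (s : Fin t) (a : Fin (n ℓ))
    (ih : ∀ r : {r : Fin m // r ≠ ℓ}, Fin (κ r.1 s)) :
    Bls B P ℓ s a ih = Bls B P' ℓ s a ih := by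
  unfold Bls
  refine Finset.sum_congr rfl fun j _ => ?_
  have hp : (∏ r : {r : Fin m // r ≠ ℓ}, star (P r.1 (j r.1) ⟨s, ih r⟩))
      = ∏ r : {r : Fin m // r ≠ ℓ}, star (P' r.1 (j r.1) ⟨s, ih r⟩) :=
    Finset.prod_congr rfl fun r _ => by rw [h r.1 r.2]
  rw [hp]

end reindex
section quad

lemma quad_identity {ι₁ ι₂ : Type*} [Fintype ι₁] [Fintype ι₂]
    (d q : ι₁ → ℂ) (u : ι₁ → ι₂ → ℂ) :
    ∑ b, d b * (2 * ∑ c, (∑ ih, u b ih * star (u c ih)) * q c)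
      = 2 * ∑ ih, (∑ b, d b * u b ih) * star (∑ c, star (q c) * u c ih) := by
  simp only [star_sum, star_mul', star_star, Finset.sum_mul, Finset.mul_sum]
  refine (Finset.sum_congr rfl fun b _ => Finset.sum_comm).trans ?_
  refine Finset.sum_comm.trans ?_
  refine Finset.sum_congr rfl fun ih _ => ?_
  refine Finset.sum_comm.trans ?_
  exact Finset.sum_congr rfl fun c _ => Finset.sum_congr rfl fun b _ => by ring

end quad

section vval

variable {m t : ℕ} {n : Fin m → ℕ} {κ : Fin m → Fin t → ℕ}

noncomputable def vval (B : (∀ ℓ, Fin (n ℓ)) → ℂ)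
    (P : ∀ ℓ, Matrix (Fin (n ℓ)) ((s : Fin t) × Fin (κ ℓ s)) ℂ) (ℓ : Fin m)
    (Q : Matrix (Fin (n ℓ)) ((s : Fin t) × Fin (κ ℓ s)) ℂ) (s : Fin t) (a : Fin (κ ℓ s))
    (ih : ∀ r : {r : Fin m // r ≠ ℓ}, Fin (κ r.1 s)) : ℂ :=
  ∑ b, star (Q b ⟨s, a⟩) * Bls B P ℓ s b ih

variable (B : (∀ ℓ, Fin (n ℓ)) → ℂ)
  (P : ∀ ℓ, Matrix (Fin (n ℓ)) ((s : Fin t) × Fin (κ ℓ s)) ℂ)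

lemma fObj_eq_vval (ℓ : Fin m) :
    fObj B P = ∑ s : Fin t, ∑ a : Fin (κ ℓ s),
      ∑ ih : ∀ r : {r : Fin m // r ≠ ℓ}, Fin (κ r.1 s),
      Complex.normSq (vval B P ℓ (P ℓ) s a ih) :=
  fObj_eq B P ℓ

lemma vval_sub (ℓ : Fin m) (Q Q' : Matrix (Fin (n ℓ)) ((s : Fin t) × Fin (κ ℓ s)) ℂ)
    (s : Fin t) (a : Fin (κ ℓ s)) (ih : ∀ r : {r : Fin m // r ≠ ℓ}, Fin (κ r.1 s)) :
    vval B P ℓ (Q - Q') s a ih = vval B P ℓ Q s a ih - vval B P ℓ Q' s a ih := by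
  simp [vval, sub_mul, star_sub, Matrix.sub_apply, Finset.sum_sub_distrib]

lemma trace_scrH (ℓ : Fin m) (D : Matrix (Fin (n ℓ)) ((s : Fin t) × Fin (κ ℓ s)) ℂ) :
    (Dᴴ * scrH B P ℓ).trace
      = 2 * ∑ s : Fin t, ∑ a : Fin (κ ℓ s),
          ∑ ih : ∀ r : {r : Fin m // r ≠ ℓ}, Fin (κ r.1 s),
          vval B P ℓ D s a ih * star (vval B P ℓ (P ℓ) s a ih) := by
  have h : (Dᴴ * scrH B P ℓ).trace
      = ∑ sc : (s : Fin t) × Fin (κ ℓ s), ∑ b, star (D b sc) * scrH B P ℓ b sc := by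
    simp [Matrix.trace, Matrix.diag, Matrix.mul_apply, Matrix.conjTranspose_apply]
  rw [h, ← Finset.univ_sigma_univ, Finset.sum_sigma, Finset.mul_sum]
  refine Finset.sum_congr rfl fun s _ => ?_
  rw [Finset.mul_sum]
  refine Finset.sum_congr rfl fun a _ => ?_
  simp only [scrH, Hmat, Matrix.of_apply, vval]
  exact quad_identity (fun b => star (D b ⟨s, a⟩)) (fun c => P ℓ c ⟨s, a⟩)
    (fun b ih => Bls B P ℓ s b ih)

end vval
section step

variable {m t : ℕ} {n : Fin m → ℕ} {κ : Fin m → Fin t → ℕ}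

lemma step_lemma (B : (∀ ℓ, Fin (n ℓ)) → ℂ) (ℓ : Fin m)
    (Pf : ∀ r, Matrix (Fin (n r)) ((s : Fin t) × Fin (κ r s)) ℂ)
    (Q' : Matrix (Fin (n ℓ)) ((s : Fin t) × Fin (κ ℓ s)) ℂ)
    (hQ : (Pf ℓ)ᴴ * Pf ℓ = 1) (hQ' : Q'ᴴ * Q' = 1)
    (Λ : Matrix ((s : Fin t) × Fin (κ ℓ s)) ((s : Fin t) × Fin (κ ℓ s)) ℂ)
    (hΛ : Λ.PosSemidef) (hfac : scrH B Pf ℓ = Q' * Λ) :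
    0 ≤ traceNorm (scrH B Pf ℓ) - ((Pf ℓ)ᴴ * scrH B Pf ℓ).trace.re ∧
    fObj B Pf + (traceNorm (scrH B Pf ℓ) - ((Pf ℓ)ᴴ * scrH B Pf ℓ).trace.re)
      ≤ fObj B (Function.update Pf ℓ Q') := by
  have hΛH : Λᴴ = Λ := hΛ.1
  have hsq : Λ ^ 2 = (scrH B Pf ℓ)ᴴ * scrH B Pf ℓ := by
    rw [hfac, Matrix.conjTranspose_mul, Matrix.mul_assoc, ← Matrix.mul_assoc Q'ᴴ Q' Λ,
      hQ', Matrix.one_mul, hΛH, pow_two]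
  have hM := Matrix.posSemidef_conjTranspose_mul_self (scrH B Pf ℓ)
  have hΛsqrt : Λ = CFC.sqrt ((scrH B Pf ℓ)ᴴ * scrH B Pf ℓ) :=
    ((CFC.sqrt_eq_iff _ _ hM.nonneg hΛ.nonneg).mpr (by rw [← pow_two, hsq])).symm
  have htn : traceNorm (scrH B Pf ℓ) = Λ.trace.re := by
    rw [hΛsqrt, sqrt_trace_re hM]
    rfl
  have htr2 : (Q'ᴴ * scrH B Pf ℓ).trace = Λ.trace := by
    rw [hfac, ← Matrix.mul_assoc, hQ', Matrix.one_mul]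
  -- nonnegativity
  set z := ((Pf ℓ)ᴴ * scrH B Pf ℓ).trace with hzdef
  set sΛ := CFC.sqrt Λ with hsdef
  have hs1 : sΛ * sΛ = Λ := CFC.sqrt_mul_sqrt_self Λ hΛ.nonneg
  have hsH : sΛᴴ = sΛ := (CFC.sqrt_nonneg Λ).posSemidef.1
  have hXX : (Pf ℓ - Q')ᴴ * (Pf ℓ - Q') = 1 + 1 - (Pf ℓ)ᴴ * Q' - Q'ᴴ * Pf ℓ := by
    rw [Matrix.conjTranspose_sub, Matrix.sub_mul, Matrix.mul_sub, Matrix.mul_sub, hQ, hQ']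
    abel
  have hA : ((Pf ℓ)ᴴ * Q' * Λ).trace = z := by rw [hzdef, hfac, Matrix.mul_assoc]
  have hB : (Q'ᴴ * Pf ℓ * Λ).trace = star z := by
    calc (Q'ᴴ * Pf ℓ * Λ).trace = (Λ * (Q'ᴴ * Pf ℓ)).trace := Matrix.trace_mul_comm _ _
      _ = (((Pf ℓ)ᴴ * (Q' * Λ))ᴴ).trace := by
          rw [Matrix.conjTranspose_mul, Matrix.conjTranspose_mul, hΛH,
            Matrix.conjTranspose_conjTranspose, Matrix.mul_assoc]
      _ = star (((Pf ℓ)ᴴ * (Q' * Λ)).trace) := Matrix.trace_conjTranspose _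
      _ = star z := by rw [hzdef, hfac]
  have hexp : ((( Pf ℓ - Q') * sΛ)ᴴ * ((Pf ℓ - Q') * sΛ)).trace
      = Λ.trace + Λ.trace - z - star z := by
    have e1 : ((Pf ℓ - Q') * sΛ)ᴴ * ((Pf ℓ - Q') * sΛ)
        = sΛ * (((Pf ℓ - Q')ᴴ * (Pf ℓ - Q')) * sΛ) := by
      rw [Matrix.conjTranspose_mul, hsH, Matrix.mul_assoc,
        ← Matrix.mul_assoc ((Pf ℓ - Q')ᴴ)]
    rw [e1, Matrix.trace_mul_comm, Matrix.mul_assoc, hs1, hXX,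
      Matrix.sub_mul, Matrix.sub_mul, Matrix.add_mul, Matrix.one_mul,
      Matrix.trace_sub, Matrix.trace_sub, Matrix.trace_add, hA, hB]
  have h0 : 0 ≤ (((Pf ℓ - Q') * sΛ)ᴴ * ((Pf ℓ - Q') * sΛ)).trace.re :=
    trace_ctm_re_nonneg _
  rw [hexp] at h0
  simp only [Complex.add_re, Complex.sub_re, Complex.conj_re, Complex.star_def] at h0
  have hnn : z.re ≤ Λ.trace.re := by linarith
  constructor
  · rw [htn]; linarith
  -- ascent
  have hold := fObj_eq_vval B Pf ℓ
  have hnew : fObj B (Function.update Pf ℓ Q')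
      = ∑ s : Fin t, ∑ a : Fin (κ ℓ s),
        ∑ ih : ∀ r : {r : Fin m // r ≠ ℓ}, Fin (κ r.1 s),
        Complex.normSq (vval B Pf ℓ Q' s a ih) := by
    rw [fObj_eq_vval B _ ℓ]
    refine Finset.sum_congr rfl fun s _ => Finset.sum_congr rfl fun a _ =>
      Finset.sum_congr rfl fun ih _ => ?_
    congr 1
    unfold vval
    refine Finset.sum_congr rfl fun b _ => ?_
    rw [Function.update_self]
    rw [Bls_congr B (Function.update Pf ℓ Q') ℓ
      (fun r hr => Function.update_of_ne hr Q' Pf) s b ih]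
  have hptw : ∀ (s : Fin t) (a : Fin (κ ℓ s))
      (ih : ∀ r : {r : Fin m // r ≠ ℓ}, Fin (κ r.1 s)),
      2 * ((vval B Pf ℓ Q' s a ih - vval B Pf ℓ (Pf ℓ) s a ih)
          * star (vval B Pf ℓ (Pf ℓ) s a ih)).re
        ≤ Complex.normSq (vval B Pf ℓ Q' s a ih)
          - Complex.normSq (vval B Pf ℓ (Pf ℓ) s a ih) := by
    intro s a ih
    set x := vval B Pf ℓ (Pf ℓ) s a ih
    set y := vval B Pf ℓ Q' s a ih
    have h2 := Complex.normSq_add (y - x) x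
    rw [sub_add_cancel] at h2
    have h3 : ((y - x) * (starRingEnd ℂ) x).re = ((y - x) * star x).re := rfl
    rw [h3] at h2
    nlinarith [Complex.normSq_nonneg (y - x)]
  have htr3 : ((Q' - Pf ℓ)ᴴ * scrH B Pf ℓ).trace.re
      = 2 * ∑ s : Fin t, ∑ a : Fin (κ ℓ s),
          ∑ ih : ∀ r : {r : Fin m // r ≠ ℓ}, Fin (κ r.1 s),
          ((vval B Pf ℓ Q' s a ih - vval B Pf ℓ (Pf ℓ) s a ih)
            * star (vval B Pf ℓ (Pf ℓ) s a ih)).re := by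
    rw [trace_scrH B Pf ℓ (Q' - Pf ℓ)]
    have h2re : ∀ w : ℂ, ((2 : ℂ) * w).re = 2 * w.re := by
      intro w; simp [Complex.mul_re]
    rw [h2re, Complex.re_sum]
    congr 1
    refine Finset.sum_congr rfl fun s _ => ?_
    rw [Complex.re_sum]
    refine Finset.sum_congr rfl fun a _ => ?_
    rw [Complex.re_sum]
    refine Finset.sum_congr rfl fun ih _ => ?_
    rw [vval_sub]
  have hdiff : ((Q' - Pf ℓ)ᴴ * scrH B Pf ℓ).trace.re
      ≤ fObj B (Function.update Pf ℓ Q') - fObj B Pf := by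
    rw [htr3, hold, hnew, ← Finset.sum_sub_distrib, Finset.mul_sum]
    refine Finset.sum_le_sum fun s _ => ?_
    rw [← Finset.sum_sub_distrib, Finset.mul_sum]
    refine Finset.sum_le_sum fun a _ => ?_
    rw [← Finset.sum_sub_distrib, Finset.mul_sum]
    exact Finset.sum_le_sum fun ih _ => hptw s a ih
  have htrsub : ((Q' - Pf ℓ)ᴴ * scrH B Pf ℓ).trace = Λ.trace - z := by
    rw [Matrix.conjTranspose_sub, Matrix.sub_mul, Matrix.trace_sub, htr2, hzdef]
  rw [htrsub, Complex.sub_re] at hdiff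
  rw [htn]
  linarith

end step

/-- per-sweep ascent bound: each Gauss–Seidel sweep increases the objective by
at least `Σ_ℓ [‖ℋ̂_ℓ^{(j)}‖_tr − Re tr((P_ℓ^{(j)})ᴴ ℋ̂_ℓ^{(j)})]`, each term being nonnegative. -/
theorem stmt_11 (m t : ℕ) (hm : 1 ≤ m) (ht : 1 ≤ t)
    (n : Fin m → ℕ) (hn : ∀ ℓ, 1 ≤ n ℓ)
    (κ : Fin m → Fin t → ℕ) (hκ : ∀ ℓ s, 1 ≤ κ ℓ s)
    (hkn : ∀ ℓ, (∑ s, κ ℓ s) ≤ n ℓ)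
    (B : (∀ ℓ, Fin (n ℓ)) → ℂ)
    (P : ℕ → ∀ ℓ, Matrix (Fin (n ℓ)) ((s : Fin t) × Fin (κ ℓ s)) ℂ)
    (horth : ∀ j ℓ, (P j ℓ)ᴴ * P j ℓ = 1)
    (hatH : ∀ j : ℕ, ∀ ℓ : Fin m, Matrix (Fin (n ℓ)) ((s : Fin t) × Fin (κ ℓ s)) ℂ)
    (hhatH : ∀ j ℓ, hatH j ℓ = scrH B (fun r => if r < ℓ then P (j + 1) r else P j r) ℓ)
    (hGS : ∀ j ℓ, ∃ Λ : Matrix ((s : Fin t) × Fin (κ ℓ s)) ((s : Fin t) × Fin (κ ℓ s)) ℂ,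
      Λ.PosSemidef ∧ hatH j ℓ = P (j + 1) ℓ * Λ)
    :
    ∀ j : ℕ,
      (∀ ℓ, 0 ≤ traceNorm (hatH j ℓ) - (Matrix.trace ((P j ℓ)ᴴ * hatH j ℓ)).re) ∧
      fObj B (P j) +
          ∑ ℓ, (traceNorm (hatH j ℓ) - (Matrix.trace ((P j ℓ)ᴴ * hatH j ℓ)).re)
        ≤ fObj B (P (j + 1)) := by
  intro j
  set G : ℕ → ∀ r, Matrix (Fin (n r)) ((s : Fin t) × Fin (κ r s)) ℂ :=
    fun c r => if (r : ℕ) < c then P (j + 1) r else P j r with hG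
  have hG0 : G 0 = P j := by funext r; simp [hG]
  have hGm : G m = P (j + 1) := by funext r; simp [hG, r.isLt]
  have hGhyb : ∀ ℓ : Fin m,
      (fun r => if r < ℓ then P (j + 1) r else P j r) = G ℓ.val := by
    intro ℓ; funext r
    simp only [hG, Fin.lt_def]
  have hGl : ∀ ℓ : Fin m, G ℓ.val ℓ = P j ℓ := by
    intro ℓ; simp [hG]
  have hstep : ∀ ℓ : Fin m,
      0 ≤ traceNorm (hatH j ℓ) - (Matrix.trace ((P j ℓ)ᴴ * hatH j ℓ)).re ∧
      fObj B (G ℓ.val) +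
        (traceNorm (hatH j ℓ) - (Matrix.trace ((P j ℓ)ᴴ * hatH j ℓ)).re)
        ≤ fObj B (G (ℓ.val + 1)) := by
    intro ℓ
    obtain ⟨Λ, hΛ, hfac⟩ := hGS j ℓ
    have hH : hatH j ℓ = scrH B (G ℓ.val) ℓ := by rw [hhatH, hGhyb]
    have hGsucc : G (ℓ.val + 1) = Function.update (G ℓ.val) ℓ (P (j + 1) ℓ) := by
      funext r
      by_cases hr : r = ℓ
      · subst hr; simp [hG, Function.update_self]
      · rw [Function.update_of_ne hr]
        have hne : (r : ℕ) ≠ ℓ.val := fun h => hr (Fin.ext h)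
        simp only [hG]
        split_ifs <;> first | rfl | omega
    have hmain := step_lemma B ℓ (G ℓ.val) (P (j + 1) ℓ)
      (by rw [hGl]; exact horth j ℓ) (horth (j + 1) ℓ) Λ hΛ (by rw [← hH]; exact hfac)
    rw [← hGsucc, ← hH, hGl] at hmain
    exact hmain
  have htel : ∀ c, c ≤ m →
      fObj B (G 0) + ∑ ℓ ∈ Finset.univ.filter (fun ℓ : Fin m => ℓ.val < c),
        (traceNorm (hatH j ℓ) - (Matrix.trace ((P j ℓ)ᴴ * hatH j ℓ)).re)
      ≤ fObj B (G c) := by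
    intro c
    induction c with
    | zero => intro _; simp
    | succ c ih =>
      intro hc
      have hcm : c < m := hc
      have hc' : c ≤ m := Nat.le_of_lt hcm
      set ℓc : Fin m := ⟨c, hcm⟩ with hℓc
      have hfilter : Finset.univ.filter (fun ℓ : Fin m => ℓ.val < c + 1)
          = insert ℓc (Finset.univ.filter (fun ℓ : Fin m => ℓ.val < c)) := by
        ext r
        simp only [Finset.mem_filter, Finset.mem_insert, Finset.mem_univ, true_and, hℓc,
          Fin.ext_iff]
        omega
      rw [hfilter, Finset.sum_insert (by simp [hℓc])]
      have h1 := ih hc'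
      have h2 := (hstep ℓc).2
      linarith
  constructor
  · intro ℓ; exact (hstep ℓ).1
  · have := htel m le_rfl
    rw [hG0, hGm] at this
    have hfilter : Finset.univ.filter (fun ℓ : Fin m => ℓ.val < m) = Finset.univ := by
      ext r; simp [r.isLt]
    rwa [hfilter] at this
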